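/- Let A be a unital *-algebra over ℂ and let (M,h,g,φ) be a real metric calculus over A. Then there exists at most one affine connection ∇ on (M,g) such that (M,h,g,φ,∇) is a pseudo-Riemannian calculus; i.e., if ∇ and ∇' are affine connections on (M,g) making (M,h,g,φ,∇) and (M,h,g,φ,∇') pseudo-Riemannian calculi, then ∇_d U = ∇'_d U for all d ∈ g and U ∈ M. -/

import Mathlib

open MulOpposite

/-- The commutator of two maps `A → A` (the Lie bracket of derivations). -/
def derComm {A : Type*} [Ring A] (d₁ d₂ : A → A) : A → A :=
  fun a => d₁ (d₂ a) - d₂ (d₁ a)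

/-- Multiplication of a map `A → A` by a real scalar, where `A` is a `ℂ`-algebra. -/
def rSMul {A : Type*} [Ring A] [Algebra ℂ A] (r : ℝ) (d : A → A) : A → A :=
  fun a => algebraMap ℂ A (r : ℂ) * d a

/-- A derivation of a (possibly noncommutative) algebra `A` into itself. -/
structure IsDerivation {A : Type*} [Ring A] (d : A → A) : Prop where
  map_add : ∀ a b : A, d (a + b) = d a + d b
  leibniz : ∀ a b : A, d (a * b) = d a * b + a * d b

/-- `g` is a real Lie algebra of hermitian derivations of the `∗`-algebra `A`. -/
structure IsRealLieAlgebraOfHermitianDerivations {A : Type*} [Ring A] [StarRing A]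
    [Algebra ℂ A] (g : Set (A → A)) : Prop where
  zero_mem : (0 : A → A) ∈ g
  add_mem : ∀ {d d' : A → A}, d ∈ g → d' ∈ g → d + d' ∈ g
  smul_mem : ∀ (r : ℝ) {d : A → A}, d ∈ g → rSMul r d ∈ g
  bracket_mem : ∀ {d d' : A → A}, d ∈ g → d' ∈ g → derComm d d' ∈ g
  isDerivation : ∀ {d : A → A}, d ∈ g → IsDerivation d
  hermitian : ∀ {d : A → A}, d ∈ g → ∀ a : A, d (star a) = star (d a)

/-- A hermitian form on a right `A`-module `M` (a right module is encoded as a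
module over the opposite algebra `Aᵐᵒᵖ`; `op a • U` is the right action `U·a`). -/
structure IsHermitianForm {A : Type*} [Ring A] [StarRing A]
    {M : Type*} [AddCommGroup M] [Module Aᵐᵒᵖ M] (h : M → M → A) : Prop where
  add_left : ∀ U V W : M, h (U + V) W = h U W + h V W
  add_right : ∀ U V W : M, h U (V + W) = h U V + h U W
  smul_right : ∀ (U V : M) (a : A), h U (op a • V) = h U V * a
  star_h : ∀ U V : M, star (h U V) = h V U

/-- A real metric calculus `(M, h, g, φ)` over a unital `∗`-algebra `A`. -/
structure RealMetricCalculus {A : Type*} [Ring A] [StarRing A] [Algebra ℂ A]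
    {M : Type*} [AddCommGroup M] [Module Aᵐᵒᵖ M]
    (h : M → M → A) (g : Set (A → A)) (φ : (A → A) → M) : Prop where
  hermitianForm : IsHermitianForm h
  nondegenerate : ∀ U : M, (∀ V : M, h U V = 0) → U = 0
  lieAlg : IsRealLieAlgebraOfHermitianDerivations g
  φ_add : ∀ {d d' : A → A}, d ∈ g → d' ∈ g → φ (d + d') = φ d + φ d'
  φ_smul : ∀ (r : ℝ) {d : A → A}, d ∈ g →
    φ (rSMul r d) = op (algebraMap ℂ A (r : ℂ)) • φ d
  generates : Submodule.span Aᵐᵒᵖ (φ '' g) = ⊤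
  herm_prod : ∀ {d d' : A → A}, d ∈ g → d' ∈ g →
    star (h (φ d) (φ d')) = h (φ d) (φ d')

/-- An affine connection on `(M, g)`. -/
structure IsAffineConnection {A : Type*} [Ring A] [StarRing A] [Algebra ℂ A]
    {M : Type*} [AddCommGroup M] [Module Aᵐᵒᵖ M]
    (g : Set (A → A)) (cn : (A → A) → M → M) : Prop where
  add_mod : ∀ {d : A → A}, d ∈ g → ∀ U V : M, cn d (U + V) = cn d U + cn d V
  add_der : ∀ {d d' : A → A}, d ∈ g → d' ∈ g → ∀ U : M, cn (d + d') U = cn d U + cn d' U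
  smul_der : ∀ (r : ℝ) {d : A → A}, d ∈ g → ∀ U : M,
    cn (rSMul r d) U = op (algebraMap ℂ A (r : ℂ)) • cn d U
  leibniz : ∀ {d : A → A}, d ∈ g → ∀ (U : M) (a : A),
    cn d (op a • U) = op a • cn d U + op (d a) • U

/-- A pseudo-Riemannian calculus `(M, h, g, φ, ∇)`: a real connection calculus
that is metric and torsion-free. -/
structure PseudoRiemannianCalculus {A : Type*} [Ring A] [StarRing A] [Algebra ℂ A]
    {M : Type*} [AddCommGroup M] [Module Aᵐᵒᵖ M]
    (h : M → M → A) (g : Set (A → A)) (φ : (A → A) → M)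
    (cn : (A → A) → M → M) : Prop where
  toRealMetricCalculus : RealMetricCalculus h g φ
  isConnection : IsAffineConnection g cn
  real_conn : ∀ {d d₁ d₂ : A → A}, d ∈ g → d₁ ∈ g → d₂ ∈ g →
    star (h (cn d (φ d₁)) (φ d₂)) = h (cn d (φ d₁)) (φ d₂)
  metric : ∀ {d : A → A}, d ∈ g → ∀ U V : M,
    d (h U V) = h (cn d U) V + h U (cn d V)
  torsionFree : ∀ {d₁ d₂ : A → A}, d₁ ∈ g → d₂ ∈ g →
    cn d₁ (φ d₂) - cn d₂ (φ d₁) - φ (derComm d₁ d₂) = 0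

/-- The curvature operator of a connection. -/
def curvatureOp {A : Type*} [Ring A] {M : Type*} [AddCommGroup M]
    (cn : (A → A) → M → M) (d₁ d₂ : A → A) (U : M) : M :=
  cn d₁ (cn d₂ U) - cn d₂ (cn d₁ U) - cn (derComm d₁ d₂) U

/-- there is at most one affine connection making a given real
metric calculus into a pseudo-Riemannian calculus. -/
theorem levi_civita_uniqueness
    {A : Type*} [Ring A] [StarRing A] [Algebra ℂ A]
    {M : Type*} [AddCommGroup M] [Module Aᵐᵒᵖ M]
    (h : M → M → A) (g : Set (A → A)) (φ : (A → A) → M)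
    (cn cn' : (A → A) → M → M)
    (H : PseudoRiemannianCalculus h g φ cn)
    (H' : PseudoRiemannianCalculus h g φ cn') :
    ∀ d ∈ g, ∀ U : M, cn d U = cn' d U := by
  obtain ⟨R, C, real, met, tf⟩ := H
  obtain ⟨_, C', real', met', tf'⟩ := H'
  have hf := R.hermitianForm
  -- basic facts about h
  have h0l : ∀ V : M, h 0 V = 0 := by
    intro V
    have e := hf.add_left 0 0 V
    rw [add_zero] at e
    exact (right_eq_add.mp e)
  have h0r : ∀ U : M, h U 0 = 0 := by
    intro U
    have e := hf.add_right U 0 0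
    rw [add_zero] at e
    exact (right_eq_add.mp e)
  have hsubl : ∀ U V W : M, h (U - V) W = h U W - h V W := by
    intro U V W
    have e := hf.add_left (U - V) V W
    rw [sub_add_cancel] at e
    rw [e]; abel
  have hsubr : ∀ U V W : M, h U (V - W) = h U V - h U W := by
    intro U V W
    have e := hf.add_right U (V - W) W
    rw [sub_add_cancel] at e
    rw [e]; abel
  -- the difference tensor evaluated on generators
  set D : (A → A) → M → M := fun d U => cn d U - cn' d U with hD
  -- reality : h (D d (φ d₁)) (φ d₂) is star-fixed
  have hreal : ∀ {d d₁ d₂ : A → A}, d ∈ g → d₁ ∈ g → d₂ ∈ g →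
      star (h (D d (φ d₁)) (φ d₂)) = h (D d (φ d₁)) (φ d₂) := by
    intro d d₁ d₂ hd hd₁ hd₂
    simp only [hD]
    rw [hsubl, star_sub, real hd hd₁ hd₂, real' hd hd₁ hd₂]
  -- reality lets us swap arguments
  have hswap : ∀ {d d₁ d₂ : A → A}, d ∈ g → d₁ ∈ g → d₂ ∈ g →
      h (φ d₂) (D d (φ d₁)) = h (D d (φ d₁)) (φ d₂) := by
    intro d d₁ d₂ hd hd₁ hd₂
    rw [← hf.star_h, hreal hd hd₁ hd₂]
  -- symmetry of D from torsion-freeness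
  have hsymm : ∀ {d₁ d₂ : A → A}, d₁ ∈ g → d₂ ∈ g →
      D d₁ (φ d₂) = D d₂ (φ d₁) := by
    intro d₁ d₂ hd₁ hd₂
    have t := tf hd₁ hd₂
    have t' := tf' hd₁ hd₂
    have e : cn d₁ (φ d₂) - cn d₂ (φ d₁) = cn' d₁ (φ d₂) - cn' d₂ (φ d₁) := by
      have a1 : cn d₁ (φ d₂) - cn d₂ (φ d₁) = φ (derComm d₁ d₂) := by
        have := sub_eq_zero.mp t; exact this
      have a2 : cn' d₁ (φ d₂) - cn' d₂ (φ d₁) = φ (derComm d₁ d₂) := by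
        have := sub_eq_zero.mp t'; exact this
      rw [a1, a2]
    simp only [hD]
    rw [sub_eq_sub_iff_add_eq_add] at e ⊢
    rw [e, add_comm]
  -- antisymmetry from metric compatibility
  have hanti : ∀ {d d₁ d₂ : A → A}, d ∈ g → d₁ ∈ g → d₂ ∈ g →
      h (D d (φ d₁)) (φ d₂) = - h (φ d₁) (D d (φ d₂)) := by
    intro d d₁ d₂ hd hd₁ hd₂
    have e := met hd (φ d₁) (φ d₂)
    have e' := met' hd (φ d₁) (φ d₂)
    simp only [hD]
    rw [hsubl, hsubr]
    rw [e] at e'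
    rw [neg_sub, sub_eq_sub_iff_add_eq_add, e', add_comm]
  -- the key Koszul-type computation : h (D d (φ d₁)) (φ d₂) = 0
  have key : ∀ {d d₁ d₂ : A → A}, d ∈ g → d₁ ∈ g → d₂ ∈ g →
      h (D d (φ d₁)) (φ d₂) = 0 := by
    intro d d₁ d₂ hd hd₁ hd₂
    have s1 : h (D d (φ d₁)) (φ d₂) = - h (D d (φ d₂)) (φ d₁) := by
      rw [hanti hd hd₁ hd₂, ← hswap hd hd₂ hd₁]
    have s2 : h (D d (φ d₂)) (φ d₁) = - h (D d₂ (φ d₁)) (φ d) := by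
      rw [hsymm hd hd₂, hanti hd₂ hd hd₁, ← hswap hd₂ hd₁ hd]
    have s3 : h (D d₂ (φ d₁)) (φ d) = - h (D d₁ (φ d)) (φ d₂) := by
      rw [hsymm hd₂ hd₁, hanti hd₁ hd₂ hd, ← hswap hd₁ hd hd₂]
    have s4 : h (D d₁ (φ d)) (φ d₂) = h (D d (φ d₁)) (φ d₂) := by
      rw [hsymm hd₁ hd]
    have e : h (D d (φ d₁)) (φ d₂) = - h (D d (φ d₁)) (φ d₂) := by
      conv_lhs => rw [s1, s2, s3, s4]
      rw [neg_neg]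
    have e2 : (2 : ℂ) • h (D d (φ d₁)) (φ d₂) = 0 := by
      rw [two_smul]
      nth_rewrite 1 [e]
      exact neg_add_cancel _
    have := congrArg (fun x => (2 : ℂ)⁻¹ • x) e2
    simpa [smul_smul] using this
  -- hence D vanishes on generators, by nondegeneracy
  have Dzero : ∀ {d d₁ : A → A}, d ∈ g → d₁ ∈ g → cn d (φ d₁) = cn' d (φ d₁) := by
    intro d d₁ hd hd₁
    have hz : ∀ V : M, h (D d (φ d₁)) V = 0 := by
      intro V
      have hV : V ∈ Submodule.span Aᵐᵒᵖ (φ '' g) := by rw [R.generates]; trivial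
      induction hV using Submodule.span_induction with
      | mem x hx =>
        obtain ⟨d₂, hd₂, rfl⟩ := hx
        exact key hd hd₁ hd₂
      | zero => exact h0r _
      | add x y hx hy ihx ihy => rw [hf.add_right, ihx, ihy, add_zero]
      | smul a x hx ih =>
        have : a • x = op (unop a) • x := by simp
        rw [this, hf.smul_right, ih, zero_mul]
    have := R.nondegenerate _ hz
    have : cn d (φ d₁) - cn' d (φ d₁) = 0 := this
    exact sub_eq_zero.mp this
  -- conclude for arbitrary U by span induction
  intro d hd U
  have hU : U ∈ Submodule.span Aᵐᵒᵖ (φ '' g) := by rw [R.generates]; trivial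
  induction hU using Submodule.span_induction with
  | mem x hx =>
    obtain ⟨d₁, hd₁, rfl⟩ := hx
    exact Dzero hd hd₁
  | zero =>
    have e : cn d 0 = cn d 0 + cn d 0 := by
      conv_lhs => rw [show (0 : M) = 0 + 0 by rw [add_zero]]
      exact C.add_mod hd 0 0
    have e' : cn' d 0 = cn' d 0 + cn' d 0 := by
      conv_lhs => rw [show (0 : M) = 0 + 0 by rw [add_zero]]
      exact C'.add_mod hd 0 0
    rw [right_eq_add.mp e, right_eq_add.mp e']
  | add x y hx hy ihx ihy => rw [C.add_mod hd, C'.add_mod hd, ihx, ihy]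
  | smul a x hx ih =>
    have ha : a • x = op (unop a) • x := by simp
    rw [ha, C.leibniz hd, C'.leibniz hd, ih]
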